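/- For each n ∈ ℕ define the convex functions f_{1,n}(x) = |x| and f_{2,n}(x) = (1/2)|x − 1/n| + (1/2)|x + 1/n| on ℝ, and let O = ℝ. Then with d₁(∂f₁, ∂f₂) = sup_{x ∈ O} H(∂f₁(x), ∂f₂(x)) and d₂(∂f₁, ∂f₂) = H(gph_O ∂f₁, gph_O ∂f₂), one has d₁(∂f_{1,n}, ∂f_{2,n}) = 1 and d₂(∂f_{1,n}, ∂f_{2,n}) = 1/n for every n; consequently d₂(∂f_{1,n}, ∂f_{2,n}) → 0 while d₁(∂f_{1,n}, ∂f_{2,n}) → 1, so the two metrics are not equivalent. -/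

import Mathlib

open MeasureTheory Metric Set Filter
open scoped InnerProductSpace ENNReal NNReal Topology

noncomputable section

variable {E : Type*} [NormedAddCommGroup E] [InnerProductSpace ℝ E]

/-- The Fréchet subdifferential of a real-valued function `f` at `x`. -/
def fsubdiff (f : E → ℝ) (x : E) : Set E :=
  {g | ∀ ε > 0, ∀ᶠ y in nhds x, f x + ⟪g, y - x⟫_ℝ - ε * ‖y - x‖ ≤ f y}

/-- The graph `gph_ℝ ∂f = {(x, y) : y ∈ ∂f(x)}` of the subdifferential mapping of
`f : ℝ → ℝ`, inside `ℝ × ℝ ≅ ℝ²` with the Euclidean (ℓ²) product distance. -/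
def sgraph (f : ℝ → ℝ) : Set (WithLp 2 (ℝ × ℝ)) :=
  {p | ((WithLp.equiv 2 (ℝ × ℝ)) p).2 ∈ fsubdiff f ((WithLp.equiv 2 (ℝ × ℝ)) p).1}

/-- `f_{1,n}(x) = |x|`. -/
def f1 : ℝ → ℝ := fun x => |x|

/-- `f_{2,n}(x) = (1/2)|x - 1/n| + (1/2)|x + 1/n|`. -/
def f2 (n : ℕ) : ℝ → ℝ := fun x => (1 / 2) * |x - 1 / (n : ℝ)| + (1 / 2) * |x + 1 / (n : ℝ)|

/-- `d₁(∂f₁, ∂f_{2,n}) = sup_{x ∈ ℝ} H(∂f₁(x), ∂f_{2,n}(x))`. -/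
def d1 (n : ℕ) : ℝ≥0∞ :=
  ⨆ x : ℝ, EMetric.hausdorffEdist (fsubdiff f1 x) (fsubdiff (f2 n) x)

/-- `d₂(∂f₁, ∂f_{2,n}) = H(gph ∂f₁, gph ∂f_{2,n})`. -/
def d2 (n : ℕ) : ℝ≥0∞ := EMetric.hausdorffEdist (sgraph f1) (sgraph (f2 n))

lemma mem_fsubdiff_of_forall {f : ℝ → ℝ} {x g : ℝ} (h : ∀ y, f x + g * (y - x) ≤ f y) :
    g ∈ fsubdiff f x := by
  intro ε hε
  filter_upwards with y
  have h1 := h y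
  have h2 : (0:ℝ) ≤ ε * ‖y - x‖ := mul_nonneg hε.le (norm_nonneg _)
  have h3 : ⟪g, y - x⟫_ℝ = g * (y - x) := by simp [mul_comm]
  rw [h3]; linarith

lemma fsubdiff_upper {f : ℝ → ℝ} {x g a δ : ℝ} (hδ : 0 < δ)
    (hf : ∀ t, 0 < t → t < δ → f (x + t) ≤ f x + a * t)
    (hg : g ∈ fsubdiff f x) : g ≤ a := by
  apply le_of_forall_pos_le_add
  intro ε hε
  have h := hg ε hε
  rw [Metric.eventually_nhds_iff] at h
  obtain ⟨δ', hδ', H⟩ := h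
  set t := min δ δ' / 2 with ht
  have ht0 : 0 < t := by positivity
  have h5 := min_le_left δ δ'
  have h6 := min_le_right δ δ'
  have htδ : t < δ := by rw [ht]; simp only [min_def] at *; split at * <;> linarith
  have htδ' : t < δ' := by rw [ht]; simp only [min_def] at *; split at * <;> linarith
  have hd : dist (x + t) x < δ' := by
    rw [Real.dist_eq]; simpa [abs_of_pos ht0] using htδ'
  have h1 := H hd
  have h2 := hf t ht0 htδ
  have h3 : ⟪g, (x + t) - x⟫_ℝ = g * t := by
    rw [show x + t - x = t by ring]; simp [mul_comm]
  rw [h3] at h1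
  have h4 : ‖(x + t) - x‖ = t := by rw [show x + t - x = t by ring, Real.norm_eq_abs, abs_of_pos ht0]
  rw [h4] at h1
  have : g * t - ε * t ≤ a * t := by linarith
  have := (mul_le_mul_iff_of_pos_right ht0).mp (by linarith : (g - ε) * t ≤ a * t)
  linarith

lemma fsubdiff_lower {f : ℝ → ℝ} {x g b δ : ℝ} (hδ : 0 < δ)
    (hf : ∀ t, 0 < t → t < δ → f (x - t) ≤ f x - b * t)
    (hg : g ∈ fsubdiff f x) : b ≤ g := by
  have : -g ≤ -b := by
    apply le_of_forall_pos_le_add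
    intro ε hε
    have h := hg ε hε
    rw [Metric.eventually_nhds_iff] at h
    obtain ⟨δ', hδ', H⟩ := h
    set t := min δ δ' / 2 with ht
    have ht0 : 0 < t := by positivity
    have h5 := min_le_left δ δ'
    have h6 := min_le_right δ δ'
    have htδ : t < δ := by rw [ht]; simp only [min_def] at *; split at * <;> linarith
    have htδ' : t < δ' := by rw [ht]; simp only [min_def] at *; split at * <;> linarith
    have hd : dist (x - t) x < δ' := by
      rw [Real.dist_eq]; rw [show x - t - x = -t by ring, abs_neg, abs_of_pos ht0]; exact htδ'
    have h1 := H hd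
    have h2 := hf t ht0 htδ
    have h3 : ⟪g, (x - t) - x⟫_ℝ = g * (-t) := by
      rw [show (x - t) - x = -t by ring]; simp [mul_comm]
    rw [h3] at h1
    have h4 : ‖(x - t) - x‖ = t := by
      rw [show x - t - x = -t by ring, Real.norm_eq_abs, abs_neg, abs_of_pos ht0]
    rw [h4] at h1
    have := (mul_le_mul_iff_of_pos_right ht0).mp (by nlinarith : (-g - ε) * t ≤ (-b) * t)
    linarith
  linarith

lemma fsubdiff_f1_pos {x : ℝ} (hx : 0 < x) : fsubdiff f1 x = {1} := by
  ext g
  simp only [Set.mem_singleton_iff]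
  constructor
  · intro hg
    have hup : g ≤ 1 := fsubdiff_upper hx
      (fun t ht htx => by
        simp only [f1]
        rw [abs_of_pos hx, abs_of_pos (by linarith : (0:ℝ) < x + t)]; linarith) hg
    have hlo : 1 ≤ g := fsubdiff_lower hx
      (fun t ht htx => by
        simp only [f1]
        rw [abs_of_pos hx, abs_of_pos (by linarith : (0:ℝ) < x - t)]; linarith) hg
    linarith
  · rintro rfl
    apply mem_fsubdiff_of_forall
    intro y
    simp only [f1]
    rw [abs_of_pos hx]
    have := le_abs_self y
    linarith

lemma fsubdiff_f1_neg {x : ℝ} (hx : x < 0) : fsubdiff f1 x = {-1} := by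
  ext g
  simp only [Set.mem_singleton_iff]
  constructor
  · intro hg
    have hup : g ≤ -1 := fsubdiff_upper (by linarith : (0:ℝ) < -x)
      (fun t ht htx => by
        simp only [f1]
        rw [abs_of_neg hx, abs_of_neg (by linarith : x + t < 0)]; linarith) hg
    have hlo : -1 ≤ g := fsubdiff_lower (by linarith : (0:ℝ) < -x)
      (fun t ht htx => by
        simp only [f1]
        rw [abs_of_neg hx, abs_of_neg (by linarith : x - t < 0)]; linarith) hg
    linarith
  · rintro rfl
    apply mem_fsubdiff_of_forall
    intro y
    simp only [f1]
    rw [abs_of_neg hx]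
    have := neg_abs_le y
    linarith

lemma fsubdiff_f1_zero : fsubdiff f1 0 = Set.Icc (-1) 1 := by
  ext g
  simp only [Set.mem_Icc]
  constructor
  · intro hg
    constructor
    · exact fsubdiff_lower one_pos
        (fun t ht ht1 => by
          simp only [f1]
          rw [show (0:ℝ) - t = -t by ring, abs_neg, abs_of_pos ht, abs_zero]; linarith) hg
    · exact fsubdiff_upper one_pos
        (fun t ht ht1 => by
          simp only [f1]
          rw [zero_add, abs_of_pos ht, abs_zero]; linarith) hg
  · rintro ⟨h1, h2⟩
    apply mem_fsubdiff_of_forall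
    intro y
    simp only [f1, abs_zero, sub_zero]
    rcases le_or_gt 0 y with hy | hy
    · have : g * y ≤ 1 * y := mul_le_mul_of_nonneg_right h2 hy
      have := le_abs_self y
      linarith
    · have : g * y ≤ (-1) * y := mul_le_mul_of_nonpos_right h1 hy.le
      have := neg_abs_le y
      linarith

section F2

variable {n : ℕ} (hn : 0 < n)

lemma c_pos (hn : 0 < n) : (0:ℝ) < 1 / (n:ℝ) := by positivity

lemma c_le_one (hn : 0 < n) : 1 / (n:ℝ) ≤ 1 := by
  rw [div_le_one (by exact_mod_cast hn)]
  exact_mod_cast hn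

lemma f2_ge_self (n : ℕ) (y : ℝ) : y ≤ f2 n y := by
  simp only [f2]
  have h1 := le_abs_self (y - 1/(n:ℝ))
  have h2 := le_abs_self (y + 1/(n:ℝ))
  linarith

lemma f2_ge_neg_self (n : ℕ) (y : ℝ) : -y ≤ f2 n y := by
  simp only [f2]
  have h1 := neg_abs_le (y - 1/(n:ℝ))
  have h2 := neg_abs_le (y + 1/(n:ℝ))
  linarith

lemma f2_ge_c (n : ℕ) (y : ℝ) : 1/(n:ℝ) ≤ f2 n y := by
  simp only [f2]
  have h1 := neg_abs_le (y - 1/(n:ℝ))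
  have h2 := le_abs_self (y + 1/(n:ℝ))
  linarith

lemma f2_val_ge {y : ℝ} (h : 1/(n:ℝ) ≤ y) : f2 n y = y := by
  have h0 : (0:ℝ) ≤ 1/(n:ℝ) := by positivity
  simp only [f2]
  rw [abs_of_nonneg (by linarith), abs_of_nonneg (by linarith)]
  ring

lemma f2_val_le {y : ℝ} (h : y ≤ -(1/(n:ℝ))) : f2 n y = -y := by
  have h0 : (0:ℝ) ≤ 1/(n:ℝ) := by positivity
  simp only [f2]
  rw [abs_of_nonpos (by linarith), abs_of_nonpos (by linarith)]
  ring

lemma f2_val_mid {y : ℝ} (h1 : -(1/(n:ℝ)) ≤ y) (h2 : y ≤ 1/(n:ℝ)) : f2 n y = 1/(n:ℝ) := by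
  simp only [f2]
  rw [abs_of_nonpos (by linarith), abs_of_nonneg (by linarith)]
  ring

lemma fsubdiff_f2_gt (hn : 0 < n) {x : ℝ} (hx : 1/(n:ℝ) < x) : fsubdiff (f2 n) x = {1} := by
  have hc := c_pos hn
  set c := 1/(n:ℝ) with hcdef
  ext g
  simp only [Set.mem_singleton_iff]
  constructor
  · intro hg
    have hup : g ≤ 1 := fsubdiff_upper (by linarith : (0:ℝ) < x - c)
      (fun t ht htx => by
        rw [f2_val_ge (by linarith : c ≤ x + t), f2_val_ge hx.le]; linarith) hg
    have hlo : 1 ≤ g := fsubdiff_lower (by linarith : (0:ℝ) < x - c)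
      (fun t ht htx => by
        rw [f2_val_ge (by linarith : c ≤ x - t), f2_val_ge hx.le]; linarith) hg
    linarith
  · rintro rfl
    apply mem_fsubdiff_of_forall
    intro y
    rw [f2_val_ge hx.le]
    have := f2_ge_self n y
    linarith

lemma fsubdiff_f2_lt (hn : 0 < n) {x : ℝ} (hx : x < -(1/(n:ℝ))) : fsubdiff (f2 n) x = {-1} := by
  have hc := c_pos hn
  set c := 1/(n:ℝ) with hcdef
  ext g
  simp only [Set.mem_singleton_iff]
  constructor
  · intro hg
    have hup : g ≤ -1 := fsubdiff_upper (by linarith : (0:ℝ) < -c - x)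
      (fun t ht htx => by
        rw [f2_val_le (by linarith : x + t ≤ -c), f2_val_le hx.le]; linarith) hg
    have hlo : -1 ≤ g := fsubdiff_lower (by linarith : (0:ℝ) < -c - x)
      (fun t ht htx => by
        rw [f2_val_le (by linarith : x - t ≤ -c), f2_val_le hx.le]; linarith) hg
    linarith
  · rintro rfl
    apply mem_fsubdiff_of_forall
    intro y
    rw [f2_val_le hx.le]
    have := f2_ge_neg_self n y
    linarith

lemma fsubdiff_f2_mid (hn : 0 < n) {x : ℝ} (hx1 : -(1/(n:ℝ)) < x) (hx2 : x < 1/(n:ℝ)) :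
    fsubdiff (f2 n) x = {0} := by
  have hc := c_pos hn
  set c := 1/(n:ℝ) with hcdef
  have hxv : f2 n x = c := f2_val_mid hx1.le hx2.le
  ext g
  simp only [Set.mem_singleton_iff]
  constructor
  · intro hg
    have hup : g ≤ 0 := fsubdiff_upper (by linarith : (0:ℝ) < c - x)
      (fun t ht htx => by
        rw [f2_val_mid (by linarith : -c ≤ x + t) (by linarith : x + t ≤ c), hxv]; linarith) hg
    have hlo : 0 ≤ g := fsubdiff_lower (by linarith : (0:ℝ) < x + c)
      (fun t ht htx => by
        rw [f2_val_mid (by linarith : -c ≤ x - t) (by linarith : x - t ≤ c), hxv]; linarith) hg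
    linarith
  · rintro rfl
    apply mem_fsubdiff_of_forall
    intro y
    rw [hxv]
    have := f2_ge_c n y
    linarith

lemma fsubdiff_f2_eqc (hn : 0 < n) : fsubdiff (f2 n) (1/(n:ℝ)) = Set.Icc 0 1 := by
  have hc := c_pos hn
  set c := 1/(n:ℝ) with hcdef
  have hxv : f2 n c = c := f2_val_ge le_rfl
  ext g
  simp only [Set.mem_Icc]
  constructor
  · intro hg
    constructor
    · exact fsubdiff_lower (by linarith : (0:ℝ) < 2*c)
        (fun t ht htx => by
          rw [f2_val_mid (by linarith : -c ≤ c - t) (by linarith : c - t ≤ c), hxv]; linarith) hg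
    · exact fsubdiff_upper one_pos
        (fun t ht htx => by
          rw [f2_val_ge (by linarith : c ≤ c + t), hxv]; linarith) hg
  · rintro ⟨h1, h2⟩
    apply mem_fsubdiff_of_forall
    intro y
    rw [hxv]
    rcases le_or_gt c y with hy | hy
    · have hy2 := f2_ge_self n y
      have : g * (y - c) ≤ 1 * (y - c) := mul_le_mul_of_nonneg_right h2 (by linarith)
      linarith
    · have hy2 := f2_ge_c n y
      have : g * (y - c) ≤ 0 := mul_nonpos_of_nonneg_of_nonpos h1 (by linarith)
      linarith

lemma fsubdiff_f2_eqnegc (hn : 0 < n) : fsubdiff (f2 n) (-(1/(n:ℝ))) = Set.Icc (-1) 0 := by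
  have hc := c_pos hn
  set c := 1/(n:ℝ) with hcdef
  have hxv : f2 n (-c) = c := by rw [f2_val_le le_rfl]; ring
  ext g
  simp only [Set.mem_Icc]
  constructor
  · intro hg
    constructor
    · exact fsubdiff_lower one_pos
        (fun t ht htx => by
          rw [f2_val_le (by linarith : -c - t ≤ -c), hxv]; linarith) hg
    · exact fsubdiff_upper (by linarith : (0:ℝ) < 2*c)
        (fun t ht htx => by
          rw [f2_val_mid (by linarith : -c ≤ -c + t) (by linarith : -c + t ≤ c), hxv]; linarith) hg
  · rintro ⟨h1, h2⟩
    apply mem_fsubdiff_of_forall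
    intro y
    rw [hxv]
    rcases le_or_gt y (-c) with hy | hy
    · have hy2 := f2_ge_neg_self n y
      have : g * (y - -c) ≤ (-1) * (y - -c) := mul_le_mul_of_nonpos_right h1 (by linarith)
      linarith
    · have hy2 := f2_ge_c n y
      have : g * (y - -c) ≤ 0 := mul_nonpos_of_nonpos_of_nonneg h2 (by linarith)
      linarith

end F2

lemma edist_le_one {a b : ℝ} (h : |a - b| ≤ 1) : edist a b ≤ 1 := by
  rw [edist_dist, Real.dist_eq]
  exact ENNReal.ofReal_le_one.mpr h

lemma edist_real (a b : ℝ) : edist a b = ENNReal.ofReal |a - b| := by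
  rw [edist_dist, Real.dist_eq]

lemma d1_eq {n : ℕ} (hn : 0 < n) : d1 n = 1 := by
  have hc := c_pos hn
  set c := 1/(n:ℝ) with hcdef
  apply le_antisymm
  · apply iSup_le
    intro x
    rcases lt_trichotomy x 0 with hx | rfl | hx
    · rcases lt_trichotomy x (-c) with h1 | rfl | h1
      · rw [fsubdiff_f1_neg hx, fsubdiff_f2_lt hn h1, EMetric.hausdorffEdist, Metric.hausdorffEDist_self]
        exact zero_le
      · rw [fsubdiff_f1_neg hx, fsubdiff_f2_eqnegc hn]
        apply EMetric.hausdorffEdist_le_of_mem_edist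
        · rintro a rfl
          exact ⟨-1, by norm_num, by simp⟩
        · rintro b hb
          rw [Set.mem_Icc] at hb
          exact ⟨-1, rfl, edist_le_one (by rw [abs_le]; constructor <;> linarith [hb.1, hb.2])⟩
      · rw [fsubdiff_f1_neg hx, fsubdiff_f2_mid hn h1 (by linarith)]
        apply EMetric.hausdorffEdist_le_of_mem_edist
        · rintro a rfl
          exact ⟨0, rfl, edist_le_one (by norm_num)⟩
        · rintro b rfl
          exact ⟨-1, rfl, edist_le_one (by norm_num)⟩
    · rw [fsubdiff_f1_zero, fsubdiff_f2_mid hn (by linarith) hc]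
      apply EMetric.hausdorffEdist_le_of_mem_edist
      · rintro a ha
        rw [Set.mem_Icc] at ha
        exact ⟨0, rfl, edist_le_one (by rw [abs_le]; constructor <;> linarith [ha.1, ha.2])⟩
      · rintro b rfl
        exact ⟨0, by norm_num, by simp⟩
    · rcases lt_trichotomy x c with h1 | rfl | h1
      · rw [fsubdiff_f1_pos hx, fsubdiff_f2_mid hn (by linarith) h1]
        apply EMetric.hausdorffEdist_le_of_mem_edist
        · rintro a rfl
          exact ⟨0, rfl, edist_le_one (by norm_num)⟩
        · rintro b rfl
          exact ⟨1, rfl, edist_le_one (by norm_num)⟩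
      · rw [fsubdiff_f1_pos hx, fsubdiff_f2_eqc hn]
        apply EMetric.hausdorffEdist_le_of_mem_edist
        · rintro a rfl
          exact ⟨1, by norm_num, by simp⟩
        · rintro b hb
          rw [Set.mem_Icc] at hb
          exact ⟨1, rfl, edist_le_one (by rw [abs_le]; constructor <;> linarith [hb.1, hb.2])⟩
      · rw [fsubdiff_f1_pos hx, fsubdiff_f2_gt hn h1, EMetric.hausdorffEdist, Metric.hausdorffEDist_self]
        exact zero_le
  · have key : (1:ℝ≥0∞) ≤
        EMetric.hausdorffEdist (fsubdiff f1 (c/2)) (fsubdiff (f2 n) (c/2)) := by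
      rw [fsubdiff_f1_pos (by linarith), fsubdiff_f2_mid hn (by linarith) (by linarith)]
      have h1 : EMetric.infEdist (1:ℝ) {0} ≤
          EMetric.hausdorffEdist ({1} : Set ℝ) ({0} : Set ℝ) :=
        EMetric.infEdist_le_hausdorffEdist_of_mem rfl
      rw [EMetric.infEdist, Metric.infEDist_singleton, edist_real] at h1
      simpa using h1
    exact le_trans key (le_iSup (fun x => EMetric.hausdorffEdist (fsubdiff f1 x) (fsubdiff (f2 n) x)) (c/2))

def P (x g : ℝ) : WithLp 2 (ℝ × ℝ) := (WithLp.equiv 2 (ℝ × ℝ)).symm (x, g)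

lemma mem_sgraph {f : ℝ → ℝ} {x g : ℝ} : P x g ∈ sgraph f ↔ g ∈ fsubdiff f x := by
  simp [sgraph, P]

lemma P_surj (p : WithLp 2 (ℝ × ℝ)) :
    p = P ((WithLp.equiv 2 (ℝ × ℝ)) p).1 ((WithLp.equiv 2 (ℝ × ℝ)) p).2 := by
  simp [P]; rfl

lemma mem_sgraph' {f : ℝ → ℝ} {p : WithLp 2 (ℝ × ℝ)} (hp : p ∈ sgraph f) :
    ((WithLp.equiv 2 (ℝ × ℝ)) p).2 ∈ fsubdiff f ((WithLp.equiv 2 (ℝ × ℝ)) p).1 := hp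

lemma edist_P (x g y h : ℝ) :
    edist (P x g) (P y h) = (edist x y ^ (2:ℝ) + edist g h ^ (2:ℝ)) ^ (1/2:ℝ) := by
  rw [WithLp.prod_edist_eq_add (by norm_num)]
  norm_num [P]

lemma rpow_two_half (a : ℝ≥0∞) : (a ^ (2:ℝ)) ^ (1/2:ℝ) = a := by
  rw [← ENNReal.rpow_mul]; norm_num

lemma edist_P_snd_eq (x y g : ℝ) : edist (P x g) (P y g) = edist x y := by
  rw [edist_P, edist_self, ENNReal.zero_rpow_of_pos (by norm_num), add_zero, rpow_two_half]

lemma edist_P_fst_eq (x g h : ℝ) : edist (P x g) (P x h) = edist g h := by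
  rw [edist_P, edist_self, ENNReal.zero_rpow_of_pos (by norm_num), zero_add, rpow_two_half]

lemma le_edist_P_fst (x g y h : ℝ) : edist x y ≤ edist (P x g) (P y h) := by
  rw [edist_P]
  calc edist x y = (edist x y ^ (2:ℝ)) ^ (1/2:ℝ) := (rpow_two_half _).symm
    _ ≤ _ := ENNReal.rpow_le_rpow le_self_add (by norm_num)

lemma le_edist_P_snd (x g y h : ℝ) : edist g h ≤ edist (P x g) (P y h) := by
  rw [edist_P]
  calc edist g h = (edist g h ^ (2:ℝ)) ^ (1/2:ℝ) := (rpow_two_half _).symm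
    _ ≤ _ := ENNReal.rpow_le_rpow le_add_self (by norm_num)

lemma exists_P (p : WithLp 2 (ℝ × ℝ)) : ∃ x g, p = P x g := ⟨_, _, P_surj p⟩

lemma d2_eq {n : ℕ} (hn : 0 < n) : d2 n = ENNReal.ofReal (1/(n:ℝ)) := by
  have hc := c_pos hn
  have hc1 := c_le_one hn
  set c := 1/(n:ℝ) with hcdef
  apply le_antisymm
  · apply EMetric.hausdorffEdist_le_of_mem_edist
    · intro p hp
      obtain ⟨x, g, rfl⟩ := exists_P p
      have hg : g ∈ fsubdiff f1 x := mem_sgraph.mp hp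
      rcases lt_trichotomy x 0 with hx0 | hx0 | hx0
      · rw [fsubdiff_f1_neg hx0, Set.mem_singleton_iff] at hg
        subst hg
        rcases le_or_gt x (-c) with h1 | h1
        · refine ⟨P x (-1), ?_, by rw [edist_self]; exact zero_le⟩
          rw [mem_sgraph]
          rcases eq_or_lt_of_le h1 with h2 | h2
          · rw [h2, fsubdiff_f2_eqnegc hn]; exact ⟨le_rfl, by norm_num⟩
          · rw [fsubdiff_f2_lt hn h2]; rfl
        · refine ⟨P (-c) (-1), ?_, ?_⟩
          · rw [mem_sgraph, fsubdiff_f2_eqnegc hn]; exact ⟨le_rfl, by norm_num⟩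
          · rw [edist_P_snd_eq, edist_real]
            apply ENNReal.ofReal_le_ofReal
            rw [abs_le]; constructor <;> linarith
      · subst hx0
        rw [fsubdiff_f1_zero, Set.mem_Icc] at hg
        rcases le_or_gt 0 g with h1 | h1
        · refine ⟨P c g, ?_, ?_⟩
          · rw [mem_sgraph, fsubdiff_f2_eqc hn]; exact ⟨h1, hg.2⟩
          · rw [edist_P_snd_eq, edist_real]
            apply ENNReal.ofReal_le_ofReal
            rw [abs_le]; constructor <;> linarith
        · refine ⟨P (-c) g, ?_, ?_⟩
          · rw [mem_sgraph, fsubdiff_f2_eqnegc hn]; exact ⟨hg.1, h1.le⟩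
          · rw [edist_P_snd_eq, edist_real]
            apply ENNReal.ofReal_le_ofReal
            rw [abs_le]; constructor <;> linarith
      · rw [fsubdiff_f1_pos hx0, Set.mem_singleton_iff] at hg
        subst hg
        rcases le_or_gt c x with h1 | h1
        · refine ⟨P x 1, ?_, by rw [edist_self]; exact zero_le⟩
          rw [mem_sgraph]
          rcases eq_or_lt_of_le h1 with h2 | h2
          · rw [← h2, fsubdiff_f2_eqc hn]; exact ⟨by norm_num, le_rfl⟩
          · rw [fsubdiff_f2_gt hn h2]; rfl
        · refine ⟨P c 1, ?_, ?_⟩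
          · rw [mem_sgraph, fsubdiff_f2_eqc hn]; exact ⟨by norm_num, le_rfl⟩
          · rw [edist_P_snd_eq, edist_real]
            apply ENNReal.ofReal_le_ofReal
            rw [abs_le]; constructor <;> linarith
    · intro p hp
      obtain ⟨x, g, rfl⟩ := exists_P p
      have hg : g ∈ fsubdiff (f2 n) x := mem_sgraph.mp hp
      rcases lt_trichotomy x (-c) with hx0 | hx0 | hx0
      · rw [fsubdiff_f2_lt hn hx0, Set.mem_singleton_iff] at hg
        subst hg
        refine ⟨P x (-1), ?_, by rw [edist_self]; exact zero_le⟩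
        rw [mem_sgraph, fsubdiff_f1_neg (by linarith)]; rfl
      · subst hx0
        rw [fsubdiff_f2_eqnegc hn, Set.mem_Icc] at hg
        refine ⟨P 0 g, ?_, ?_⟩
        · rw [mem_sgraph, fsubdiff_f1_zero]
          exact ⟨hg.1, le_trans hg.2 zero_le_one⟩
        · rw [edist_P_snd_eq, edist_real]
          apply ENNReal.ofReal_le_ofReal
          rw [abs_le]; constructor <;> linarith
      · rcases lt_trichotomy x c with hx1 | hx1 | hx1
        · rw [fsubdiff_f2_mid hn hx0 hx1, Set.mem_singleton_iff] at hg
          subst hg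
          refine ⟨P 0 0, ?_, ?_⟩
          · rw [mem_sgraph, fsubdiff_f1_zero]
            constructor <;> norm_num
          · rw [edist_P_snd_eq, edist_real]
            apply ENNReal.ofReal_le_ofReal
            rw [abs_le]; constructor <;> linarith
        · subst hx1
          rw [fsubdiff_f2_eqc hn, Set.mem_Icc] at hg
          refine ⟨P 0 g, ?_, ?_⟩
          · rw [mem_sgraph, fsubdiff_f1_zero]
            exact ⟨le_trans (by norm_num) hg.1, hg.2⟩
          · rw [edist_P_snd_eq, edist_real]
            apply ENNReal.ofReal_le_ofReal
            rw [abs_le]; constructor <;> linarith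
        · rw [fsubdiff_f2_gt hn hx1, Set.mem_singleton_iff] at hg
          subst hg
          refine ⟨P x 1, ?_, by rw [edist_self]; exact zero_le⟩
          rw [mem_sgraph, fsubdiff_f1_pos (by linarith)]; rfl
  · have h1 : P 0 1 ∈ sgraph f1 := by
      rw [mem_sgraph, fsubdiff_f1_zero]
      exact ⟨by norm_num, le_rfl⟩
    refine le_trans ?_ (EMetric.infEdist_le_hausdorffEdist_of_mem h1)
    apply EMetric.le_infEdist.mpr
    intro q hq
    obtain ⟨x, g, rfl⟩ := exists_P q
    have hg : g ∈ fsubdiff (f2 n) x := mem_sgraph.mp hq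
    by_cases hx : -c < x ∧ x < c
    · rw [fsubdiff_f2_mid hn hx.1 hx.2, Set.mem_singleton_iff] at hg
      subst hg
      refine le_trans ?_ (le_edist_P_snd 0 1 x 0)
      rw [edist_real]
      apply ENNReal.ofReal_le_ofReal
      rw [show |(1:ℝ) - 0| = 1 by norm_num]
      exact hc1
    · push_neg at hx
      refine le_trans ?_ (le_edist_P_fst 0 1 x g)
      rw [edist_real, zero_sub, abs_neg]
      apply ENNReal.ofReal_le_ofReal
      rcases le_or_gt x (-c) with h2 | h2
      · exact le_abs.mpr (Or.inr (by linarith))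
      · exact le_abs.mpr (Or.inl (hx (by linarith)))

/-- For every `n ≥ 1`, `d₁(∂f_{1,n}, ∂f_{2,n}) = 1` and
`d₂(∂f_{1,n}, ∂f_{2,n}) = 1/n`; consequently `d₂ → 0` while `d₁ → 1`, so the two
metrics are not equivalent. -/
theorem statement3 :
    (∀ n : ℕ, 0 < n → d1 n = 1 ∧ d2 n = ENNReal.ofReal (1 / (n : ℝ))) ∧
    Filter.Tendsto d2 Filter.atTop (nhds 0) ∧
    Filter.Tendsto d1 Filter.atTop (nhds 1) := by
  refine ⟨fun n hn => ⟨d1_eq hn, d2_eq hn⟩, ?_, ?_⟩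
  · have h : ∀ᶠ (n : ℕ) in Filter.atTop, ENNReal.ofReal (1/(n:ℝ)) = d2 n :=
      Filter.eventually_atTop.mpr ⟨1, fun n hn => (d2_eq hn).symm⟩
    refine Filter.Tendsto.congr' h ?_
    have := ENNReal.tendsto_ofReal tendsto_one_div_atTop_nhds_zero_nat
    simpa using this
  · have h : ∀ᶠ (n : ℕ) in Filter.atTop, (1:ℝ≥0∞) = d1 n :=
      Filter.eventually_atTop.mpr ⟨1, fun n hn => (d1_eq hn).symm⟩
    exact Filter.Tendsto.congr' h tendsto_const_nhds
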